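/- Let Γ be a tree on the vertex set [m+1]. Then the generic monomial ideal I(Γ) has the primary decomposition I(Γ) = ⋂_{1 ≤ i < j ≤ m+1} (x_{i,b(i,j)}, x_{j,e(i,j)}), the intersection of the ideals generated by the two indicated variables taken over all pairs of distinct vertices i < j. -/

import Mathlib

open MvPolynomial

namespace CMCodim2

noncomputable section

/-- The total degree of an exponent vector (of a monomial). -/
def mdeg {σ : Type*} (a : σ →₀ ℕ) : ℕ := a.sum fun _ e => e

/-- The height (codimension) of an ideal: the infimum of the heights of the
prime ideals containing it. -/
def idealHeight {R : Type*} [CommRing R] (I : Ideal R) : ℕ∞ :=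
  ⨅ (p : PrimeSpectrum R) (_ : I ≤ p.asIdeal), Order.height p

/-- An ideal `I` of a polynomial ring is a Cohen–Macaulay ideal of codimension `2`
iff it has height `2` and `R/I` has a free resolution
`0 → R^a → R^b → R → R/I → 0` of length `2` (Auslander–Buchsbaum). -/
def IsCMCodim2 {R : Type*} [CommRing R] (I : Ideal R) : Prop :=
  idealHeight I = 2 ∧
    ∃ (a b : ℕ) (f : (Fin a → R) →ₗ[R] (Fin b → R)) (g : (Fin b → R) →ₗ[R] R),
      Function.Injective f ∧ LinearMap.range f = LinearMap.ker g ∧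
        LinearMap.range g = I

/-- The map `φ₁ : S^{m+1} → S`, `e_i ↦ u_i`, where `u_i` is the (monic) monomial
with exponent vector `d i`. -/
def phi (K : Type*) [Field K] {σ : Type*} (m : ℕ) (d : Fin (m + 1) → (σ →₀ ℕ)) :
    (Fin (m + 1) → MvPolynomial σ K) →ₗ[MvPolynomial σ K] MvPolynomial σ K where
  toFun v := ∑ i, v i * monomial (d i) 1
  map_add' x y := by simp [add_mul, Finset.sum_add_distrib]
  map_smul' c x := by simp [Finset.mul_sum, mul_assoc]

/-- The Taylor relation `r_{ij} = u_{ji} e_j - u_{ij} e_i ∈ S^{m+1}` of the monomials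
`u_i, u_j` with exponent vectors `d i, d j`; here `u_{ji} = u_i / gcd(u_i,u_j)`
has exponent vector `d i - d j` (truncated subtraction). -/
def taylorRel (K : Type*) [Field K] {σ : Type*} (m : ℕ) (d : Fin (m + 1) → (σ →₀ ℕ))
    (i j : Fin (m + 1)) : Fin (m + 1) → MvPolynomial σ K := fun k =>
  if k = j then monomial (d i - d j) 1
  else if k = i then -(monomial (d j - d i) 1) else 0

/-- `t` lists the `m` (unordered) pairs of indices of Taylor relations forming the rows of
a Hilbert–Burch matrix of the ideal generated by the `m+1` monomials with exponent
vectors `d i`: the corresponding Taylor relations generate (hence, being `m` elements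
generating the free rank-`m` module, minimally generate) the first syzygy module
`U = ker φ₁`. -/
def IsHB (K : Type*) [Field K] {σ : Type*} (m : ℕ) (d : Fin (m + 1) → (σ →₀ ℕ))
    (t : Fin m → Fin (m + 1) × Fin (m + 1)) : Prop :=
  (∀ k, (t k).1 ≠ (t k).2) ∧
    Submodule.span (MvPolynomial σ K)
        (Set.range fun k => taylorRel K m d (t k).1 (t k).2) =
      LinearMap.ker (phi K m d)

/-- The graph on `[m+1]` whose edges `{i,j}` are the pairs of columns in which the rows
of a Hilbert–Burch matrix (given by the list `t` of pairs) have their nonzero entries. -/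
def relGraph {m : ℕ} (t : Fin m → Fin (m + 1) × Fin (m + 1)) :
    SimpleGraph (Fin (m + 1)) :=
  SimpleGraph.fromRel fun i j => ∃ k, t k = (i, j)

/-- `T(I)`: the set of relation trees (graphs of Hilbert–Burch matrices) of the ideal
generated by the `m+1` monomials with exponent vectors `d i`. -/
def relTrees (K : Type*) [Field K] {σ : Type*} (m : ℕ) (d : Fin (m + 1) → (σ →₀ ℕ)) :
    Set (SimpleGraph (Fin (m + 1))) :=
  {Γ | ∃ t, IsHB K m d t ∧ relGraph t = Γ}

/-- The Taylor graph `G(I)`: the union of all relation trees of `I`. -/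
def taylorGraph (K : Type*) [Field K] {σ : Type*} (m : ℕ)
    (d : Fin (m + 1) → (σ →₀ ℕ)) : SimpleGraph (Fin (m + 1)) :=
  sSup (relTrees K m d)

/-- `I` is (the monomial ideal) minimally generated by the `m+1` monic monomials with
exponent vectors `d i`. -/
def MinGens (K : Type*) [Field K] {σ : Type*} (m : ℕ) (d : Fin (m + 1) → (σ →₀ ℕ))
    (I : Ideal (MvPolynomial σ K)) : Prop :=
  I = Ideal.span (Set.range fun i => (monomial (d i) 1 : MvPolynomial σ K)) ∧
    ∀ j : Fin (m + 1), (monomial (d j) 1 : MvPolynomial σ K) ∉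
      Ideal.span ((fun i => (monomial (d i) 1 : MvPolynomial σ K)) '' {i | i ≠ j})

/-- The ideal generated by the `m+1` monomials with exponent vectors `d i` has a linear
resolution: all generators have the same degree and all the entries of every
Hilbert–Burch matrix of `I` are linear forms (i.e. every Taylor relation occurring as a
row of a Hilbert–Burch matrix is linear). -/
def HasLinearRes (K : Type*) [Field K] {σ : Type*} (m : ℕ)
    (d : Fin (m + 1) → (σ →₀ ℕ)) : Prop :=
  (∃ c, ∀ i, mdeg (d i) = c) ∧
    ∀ t, IsHB K m d t →
      ∀ k, mdeg (d (t k).1 - d (t k).2) = 1 ∧ mdeg (d (t k).2 - d (t k).1) = 1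

/-- A graph is chordal if every cycle of length at least `4` has a chord, i.e. an edge
of the graph joining two vertices of the cycle which is not an edge of the cycle. -/
def IsChordal {V : Type*} (G : SimpleGraph V) : Prop :=
  ∀ ⦃v : V⦄ (w : G.Walk v v), w.IsCycle → 4 ≤ w.length →
    ∃ a b, a ∈ w.support ∧ b ∈ w.support ∧ G.Adj a b ∧ s(a, b) ∉ w.edges

/-- A maximal clique of a graph. -/
def IsMaxClique {V : Type*} (G : SimpleGraph V) (s : Set V) : Prop :=
  G.IsClique s ∧ ∀ t : Set V, G.IsClique t → s ⊆ t → t = s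

/-- `b` is the "path-begin" function of the tree `G`: for `i ≠ j`, `b i j` is the
first vertex after `i` on the unique path in `G` from `i` to `j` (equivalently, the
neighbour of `i` which is one step closer to `j`). -/
def PathBegin {V : Type*} (G : SimpleGraph V) (b : V → V → V) : Prop :=
  ∀ i j : V, i ≠ j → G.Adj i (b i j) ∧ G.dist (b i j) j + 1 = G.dist i j

/-- The index set of the `2m` indeterminates `x_{ij}`: ordered pairs `(i,j)` such that
`{i,j}` is an edge of `G`. -/
abbrev EdgeVar {N : ℕ} (G : SimpleGraph (Fin N)) : Type :=
  {p : Fin N × Fin N // G.Adj p.1 p.2}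

/-- `ε` enumerates the edges of `G` (each unordered edge appearing exactly once). -/
def EdgeEnum {m : ℕ} (G : SimpleGraph (Fin (m + 1)))
    (ε : Fin m → Fin (m + 1) × Fin (m + 1)) : Prop :=
  ∀ i j : Fin (m + 1), G.Adj i j → ∃! k, ε k = (i, j) ∨ ε k = (j, i)

/-- The generic matrix `A(Γ)` attached to the tree `G` with edges enumerated by `ε`:
the `k`-th row, for the `k`-th edge `{i,j}`, has entry `-x_{ij}` in column `i`,
entry `x_{ji}` in column `j` and `0` elsewhere. -/
def genMat (K : Type*) [Field K] {m : ℕ} (G : SimpleGraph (Fin (m + 1)))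
    (ε : Fin m → Fin (m + 1) × Fin (m + 1)) (hε : ∀ k, G.Adj (ε k).1 (ε k).2) :
    Matrix (Fin m) (Fin (m + 1)) (MvPolynomial (EdgeVar G) K) := fun k l =>
  if l = (ε k).1 then -(X ⟨ε k, hε k⟩)
  else if l = (ε k).2 then X ⟨((ε k).2, (ε k).1), (hε k).symm⟩
  else 0

/-- `v_j`: the maximal minor of the generic matrix `A(Γ)` obtained by omitting the
`j`-th column. -/
def genMinor (K : Type*) [Field K] {m : ℕ} (G : SimpleGraph (Fin (m + 1)))
    (ε : Fin m → Fin (m + 1) × Fin (m + 1)) (hε : ∀ k, G.Adj (ε k).1 (ε k).2)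
    (j : Fin (m + 1)) : MvPolynomial (EdgeVar G) K :=
  ((genMat K G ε hε).submatrix id j.succAbove).det

/-- The monomial `∏_{i ≠ j} x_{i, b(i,j)}`. -/
def genV (K : Type*) [Field K] {m : ℕ} (G : SimpleGraph (Fin (m + 1)))
    (b : Fin (m + 1) → Fin (m + 1) → Fin (m + 1))
    (hb : ∀ i j : Fin (m + 1), i ≠ j → G.Adj i (b i j)) (j : Fin (m + 1)) :
    MvPolynomial (EdgeVar G) K :=
  ∏ i, if h : i = j then 1 else X ⟨(i, b i j), hb i j h⟩

/-- The exponent vector of the monomial `∏_{i ≠ j} x_{i, b(i,j)}`. -/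
def genD {m : ℕ} (G : SimpleGraph (Fin (m + 1)))
    (b : Fin (m + 1) → Fin (m + 1) → Fin (m + 1))
    (hb : ∀ i j : Fin (m + 1), i ≠ j → G.Adj i (b i j)) (j : Fin (m + 1)) :
    EdgeVar G →₀ ℕ :=
  ∑ i, if h : i = j then 0 else Finsupp.single ⟨(i, b i j), hb i j h⟩ 1

end

end CMCodim2


namespace CMCodim2Aux

open CMCodim2 MvPolynomial SimpleGraph


open SimpleGraph

set_option linter.unusedSectionVars false
variable {V : Type*} [DecidableEq V] {G : SimpleGraph V}

/-- In a tree, every path has length equal to the distance of its endpoints. -/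
lemma tree_path_length (hG : G.IsTree) {u v : V} (p : G.Walk u v) (hp : p.IsPath) :
    p.length = G.dist u v := by
  obtain ⟨q, hq, hql⟩ := hG.isConnected.exists_path_of_dist u v
  have : (⟨p, hp⟩ : G.Path u v) = ⟨q, hq⟩ := hG.IsAcyclic.path_unique _ _
  rw [← hql]
  exact congrArg Walk.length (congrArg Subtype.val this)

/-- Vertices on a geodesic walk split the distance. -/
lemma dist_add_of_mem_support (hG : G.Connected) {u v w : V} (p : G.Walk u v)
    (hl : p.length = G.dist u v) (hw : w ∈ p.support) :
    G.dist u w + G.dist w v = G.dist u v := by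
  have h1 : G.dist u w ≤ (p.takeUntil w hw).length := dist_le _
  have h2 : G.dist w v ≤ (p.dropUntil w hw).length := dist_le _
  have h3 : (p.takeUntil w hw).length + (p.dropUntil w hw).length = p.length := by
    rw [← Walk.length_append, Walk.take_spec]
  have h4 : G.dist u v ≤ G.dist u w + G.dist w v := hG.dist_triangle
  omega

/-- In a tree, distances of adjacent vertices to a third vertex differ by exactly one. -/
lemma adj_dist (hG : G.IsTree) {u w j : V} (h : G.Adj u w) :
    G.dist u j + 1 = G.dist w j ∨ G.dist w j + 1 = G.dist u j := by
  have hc := hG.isConnected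
  have huw : G.dist u w = 1 := SimpleGraph.dist_eq_one_iff_adj.mpr h
  have t1 : G.dist u j ≤ 1 + G.dist w j := by
    have := hc.dist_triangle (u := u) (v := w) (w := j); omega
  have t2 : G.dist w j ≤ 1 + G.dist u j := by
    have := hc.dist_triangle (u := w) (v := u) (w := j)
    rw [SimpleGraph.dist_comm (u := w) (v := u)] at this; omega
  rcases Nat.lt_trichotomy (G.dist u j) (G.dist w j) with hlt | heq | hgt
  · left; omega
  · exfalso
    obtain ⟨q, hq, hql⟩ := hc.exists_path_of_dist w j
    have hu : u ∉ q.support := by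
      intro hu
      have := dist_add_of_mem_support hc q hql hu
      have h0 : G.dist w u = 1 := by rw [SimpleGraph.dist_comm]; exact huw
      omega
    have hpath : (Walk.cons h q).IsPath := (Walk.cons_isPath_iff h q).mpr ⟨hq, hu⟩
    have := tree_path_length hG _ hpath
    simp only [Walk.length_cons] at this
    omega
  · right; omega

/-- In a tree, the first step of a geodesic is unique. -/
lemma tree_unique_step (hG : G.IsTree) {i j c c' : V}
    (hc : G.Adj i c) (hc' : G.Adj i c')
    (hd : G.dist c j + 1 = G.dist i j) (hd' : G.dist c' j + 1 = G.dist i j) : c = c' := by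
  have hcon := hG.isConnected
  obtain ⟨p, hp, hpl⟩ := hcon.exists_path_of_dist c j
  obtain ⟨q, hq, hql⟩ := hcon.exists_path_of_dist c' j
  have hip : i ∉ p.support := fun hi => by
    have := dist_add_of_mem_support hcon p hpl hi; omega
  have hiq : i ∉ q.support := fun hi => by
    have := dist_add_of_mem_support hcon q hql hi; omega
  have h1 : (Walk.cons hc p).IsPath := (Walk.cons_isPath_iff hc p).mpr ⟨hp, hip⟩
  have h2 : (Walk.cons hc' q).IsPath := (Walk.cons_isPath_iff hc' q).mpr ⟨hq, hiq⟩
  have heq : (⟨Walk.cons hc p, h1⟩ : G.Path i j) = ⟨Walk.cons hc' q, h2⟩ :=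
    hG.IsAcyclic.path_unique _ _
  have heqw : Walk.cons hc p = Walk.cons hc' q := congrArg Subtype.val heq
  have := congrArg (fun w : G.Walk i j => w.getVert 1) heqw
  simpa using this

variable {b : V → V → V}

/-- Lemma C: if the branch from `i` towards `k` differs from that towards `j`,
then `i` lies between `k` and `j`. -/
lemma tree_between (hG : G.IsTree)
    (hb : ∀ i j, i ≠ j → G.Adj i (b i j) ∧ G.dist (b i j) j + 1 = G.dist i j) :
    ∀ n i j k, G.dist i k = n → i ≠ j → k ≠ i → b i k ≠ b i j →
      G.dist k j = G.dist k i + G.dist i j := by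
  intro n
  induction n using Nat.strong_induction_on with
  | _ n IH =>
    intro i j k hn hij hki hbb
    have hcon := hG.isConnected
    obtain ⟨hic, hck⟩ := hb i k hki.symm
    have hdcj : G.dist i j + 1 = G.dist (b i k) j := by
      rcases adj_dist hG (j := j) hic with h | h
      · exact h
      · exact absurd (tree_unique_step hG hic (hb i j hij).1 h (hb i j hij).2) hbb
    by_cases hkc : k = b i k
    · have h0 : G.dist (b i k) k = 0 := by rw [← hkc]; simp
      have hkik : G.dist k i = G.dist i k := SimpleGraph.dist_comm
      have hkj : G.dist k j = G.dist (b i k) j := by rw [← hkc]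
      omega
    · have hcj : b i k ≠ j := by
        intro h
        rw [h, SimpleGraph.dist_self] at hdcj
        omega
      have hbcj : b (b i k) j = i := by
        refine tree_unique_step hG (hb (b i k) j hcj).1 hic.symm (hb (b i k) j hcj).2 ?_
        omega
      have hbck : b (b i k) k ≠ b (b i k) j := by
        rw [hbcj]
        intro h
        have := (hb (b i k) k (fun hh => hkc hh.symm)).2
        rw [h] at this
        omega
      have hlt : G.dist (b i k) k < n := by omega
      have := IH _ hlt (b i k) j k rfl hcj (fun hh => hkc hh) hbck
      have e1 : G.dist k (b i k) = G.dist (b i k) k := SimpleGraph.dist_comm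
      have e2 : G.dist k i = G.dist i k := SimpleGraph.dist_comm
      omega

/-- Lemma A': branching dichotomy, strong form. -/
lemma tree_branch' (hG : G.IsTree)
    (hb : ∀ i j, i ≠ j → G.Adj i (b i j) ∧ G.dist (b i j) j + 1 = G.dist i j)
    {i j k : V} (hij : i ≠ j) (hki : k ≠ i) (hbb : b i k ≠ b i j) :
    k ≠ j ∧ b j k = b j i := by
  have hcon := hG.isConnected
  have hkj : k ≠ j := by
    rintro rfl; exact hbb rfl
  have hC := tree_between hG hb _ i j k rfl hij hki hbb
  refine ⟨hkj, ?_⟩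
  obtain ⟨hja, hjd⟩ := hb j i hij.symm
  have h1 : G.dist (b j i) k ≤ G.dist (b j i) i + G.dist i k := hcon.dist_triangle
  have h2 : G.dist j k ≤ G.dist j (b j i) + G.dist (b j i) k := hcon.dist_triangle
  have h3 : G.dist j (b j i) = 1 := SimpleGraph.dist_eq_one_iff_adj.mpr hja
  have e1 : G.dist k j = G.dist j k := SimpleGraph.dist_comm
  have e2 : G.dist k i = G.dist i k := SimpleGraph.dist_comm
  have e3 : G.dist i j = G.dist j i := SimpleGraph.dist_comm
  have hd : G.dist (b j i) k + 1 = G.dist j k := by omega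
  exact (tree_unique_step hG hja (hb j k hkj.symm).1 hd (hb j k hkj.symm).2).symm

/-- Lemma A: branching dichotomy. -/
lemma tree_branch (hG : G.IsTree)
    (hb : ∀ i j, i ≠ j → G.Adj i (b i j) ∧ G.dist (b i j) j + 1 = G.dist i j)
    {i j : V} (hij : i ≠ j) (k : V) :
    (k ≠ i ∧ b i k = b i j) ∨ (k ≠ j ∧ b j k = b j i) := by
  by_cases hki : k = i
  · subst hki; exact Or.inr ⟨hij, rfl⟩
  · by_cases hbb : b i k = b i j
    · exact Or.inl ⟨hki, hbb⟩
    · exact Or.inr (tree_branch' hG hb hij hki hbb)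

/-- The covering lemma: if for every pair one of the two canonical directed edges
is selected, then some vertex `k` has all canonical edges towards it selected. -/
lemma tree_cover [Fintype V] [Nonempty V] (hG : G.IsTree)
    (hb : ∀ i j, i ≠ j → G.Adj i (b i j) ∧ G.dist (b i j) j + 1 = G.dist i j)
    (P : V → V → Prop) (hP : ∀ i j, i ≠ j → P i (b i j) ∨ P j (b j i)) :
    ∃ k, ∀ l, l ≠ k → P l (b l k) := by
  classical
  by_contra hcon
  push_neg at hcon
  -- hcon : ∀ k, ∃ l, l ≠ k ∧ ¬ P l (b l k)
  set T : Finset (V × V) :=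
    Finset.univ.filter (fun p => p.1 ≠ p.2 ∧ ¬ P p.1 (b p.1 p.2)) with hT
  have hTmem : ∀ p : V × V, p ∈ T ↔ p.1 ≠ p.2 ∧ ¬ P p.1 (b p.1 p.2) := by
    intro p; simp [hT]
  set F : V × V → ℕ :=
    fun p => (Finset.univ.filter (fun v => v ≠ p.1 ∧ b p.1 v = b p.1 p.2)).card with hF
  have hne : T.Nonempty := by
    obtain ⟨l, hl1, hl2⟩ := hcon Classical.ofNonempty
    exact ⟨(l, Classical.ofNonempty), (hTmem _).mpr ⟨hl1, hl2⟩⟩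
  obtain ⟨p₀, hp₀T, hp₀max⟩ := T.exists_max_image F hne
  obtain ⟨hp₀ne, hp₀P⟩ := (hTmem _).mp hp₀T
  obtain ⟨l, hl1, hl2⟩ := hcon p₀.1
  by_cases hcase : b p₀.1 l = b p₀.1 p₀.2
  · rcases hP p₀.1 l (fun h => hl1 h.symm) with h | h
    · exact hp₀P (hcase ▸ h)
    · exact hl2 h
  · -- the branch of (l, p₀.1) strictly contains that of p₀
    have hsub : Finset.univ.filter (fun v => v ≠ p₀.1 ∧ b p₀.1 v = b p₀.1 p₀.2) ⊂
        Finset.univ.filter (fun v => v ≠ l ∧ b l v = b l p₀.1) := by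
      constructor
      · intro v hv
        simp only [Finset.mem_filter, Finset.mem_univ, true_and] at hv ⊢
        obtain ⟨hv1, hv2⟩ := hv
        have hbne : b p₀.1 v ≠ b p₀.1 l := by rw [hv2]; exact fun h => hcase h.symm
        exact tree_branch' hG hb (fun h => hl1 h.symm) hv1 hbne
      · intro hsub'
        have : p₀.1 ∈ Finset.univ.filter (fun v => v ≠ l ∧ b l v = b l p₀.1) :=
          Finset.mem_filter.mpr ⟨Finset.mem_univ _, fun h => hl1 h.symm, rfl⟩
        have := hsub' this
        simp only [Finset.mem_filter, Finset.mem_univ, true_and] at this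
        exact this.1 rfl
    have hlt : F p₀ < F (l, p₀.1) := Finset.card_lt_card hsub
    have hle : F (l, p₀.1) ≤ F p₀ := hp₀max _ ((hTmem _).mpr ⟨hl1, hl2⟩)
    omega

section Aux

variable {K : Type*} [Field K]

lemma prod_monomial {α σ : Type*} (s : Finset α) (g : α → (σ →₀ ℕ)) :
    ∏ a ∈ s, (monomial (g a) (1 : K)) = monomial (∑ a ∈ s, g a) 1 := by
  classical
  induction s using Finset.induction with
  | empty => simp
  | insert _ _ h ih =>
      rw [Finset.prod_insert h, Finset.sum_insert h, ih, monomial_mul, one_mul]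

lemma X_eq_monomial {σ : Type*} (a : σ) :
    (X a : MvPolynomial σ K) = monomial (Finsupp.single a 1) 1 := rfl

/-- The minor `v_j` is `±` the monomial with exponent vector `genD j`. -/
lemma minor_eq_monomial (K : Type*) [Field K] {m : ℕ} {G : SimpleGraph (Fin (m + 1))}
    (hG : G.IsTree)
    {ε : Fin m → Fin (m + 1) × Fin (m + 1)} (hε : ∀ k, G.Adj (ε k).1 (ε k).2)
    (henum : EdgeEnum G ε)
    {b : Fin (m + 1) → Fin (m + 1) → Fin (m + 1)} (hb : PathBegin G b) (j : Fin (m + 1)) :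
    ∃ c : MvPolynomial (EdgeVar G) K, (c = 1 ∨ c = -1) ∧
      genMinor K G ε hε j =
        c * monomial (genD G b (fun i j h => (hb i j h).1) j) 1 := by
  classical
  set hb' : ∀ i j : Fin (m+1), i ≠ j → G.Adj i (b i j) := fun i j h => (hb i j h).1 with hhb'
  set v : Fin m → Fin (m + 1) := fun l => j.succAbove l with hv
  have hvj : ∀ l, v l ≠ j := fun l => Fin.succAbove_ne j l
  have hbv : ∀ l, G.Adj (v l) (b (v l) j) := fun l => (hb _ j (hvj l)).1
  set τ : Fin m → Fin m := fun l => (henum (v l) (b (v l) j) (hbv l)).choose with hτdef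
  have hτ : ∀ l, ε (τ l) = (v l, b (v l) j) ∨ ε (τ l) = (b (v l) j, v l) :=
    fun l => (henum (v l) (b (v l) j) (hbv l)).choose_spec.1
  have hτu : ∀ l k, (ε k = (v l, b (v l) j) ∨ ε k = (b (v l) j, v l)) → k = τ l :=
    fun l k h => (henum (v l) (b (v l) j) (hbv l)).choose_spec.2 k h
  have hdistb : ∀ l, G.dist (b (v l) j) j + 1 = G.dist (v l) j := fun l => (hb _ j (hvj l)).2
  have hτinj : Function.Injective τ := by
    intro l1 l2 h
    have h1 := hτ l1
    rw [h] at h1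
    have h2 := hτ l2
    have hveq : v l1 = v l2 := by
      rcases h1 with h1 | h1 <;> rcases h2 with h2 | h2 <;> rw [h1] at h2 <;>
        rw [Prod.mk.injEq] at h2
      · exact h2.1
      · have e1 := hdistb l1
        have e2 := hdistb l2
        rw [← h2.1, ← h2.2] at e2
        omega
      · have e1 := hdistb l1
        have e2 := hdistb l2
        rw [h2.1, h2.2] at e1
        omega
      · exact h2.2
    exact Fin.succAbove_right_injective hveq
  set σ₀ : Equiv.Perm (Fin m) :=
    Equiv.ofBijective τ (Finite.injective_iff_bijective.mp hτinj) with hσ₀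
  have hσ₀app : ∀ l, σ₀ l = τ l := fun l => Equiv.ofBijective_apply _ _ _
  set M : Matrix (Fin m) (Fin m) (MvPolynomial (EdgeVar G) K) :=
    (genMat K G ε hε).submatrix id j.succAbove with hM
  set s : Fin m → MvPolynomial (EdgeVar G) K :=
    fun l => if (ε (τ l)).1 = v l then -1 else 1 with hs
  -- diagonal entries
  have hdiag : ∀ l, M (σ₀ l) l = s l * X ⟨(v l, b (v l) j), hbv l⟩ := by
    intro l
    have : M (σ₀ l) l = genMat K G ε hε (τ l) (v l) := by
      rw [hσ₀app]; rfl
    rw [this]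
    rcases hτ l with h | h
    · have h1 : v l = (ε (τ l)).1 := by rw [h]
      have hX : (⟨ε (τ l), hε (τ l)⟩ : EdgeVar G) = ⟨(v l, b (v l) j), hbv l⟩ :=
        Subtype.ext h
      have hsl : s l = -1 := if_pos h1.symm
      simp only [genMat, if_pos h1]
      rw [hX, hsl, neg_one_mul]
    · have h1 : (ε (τ l)).1 = b (v l) j := by rw [h]
      have h2 : v l = (ε (τ l)).2 := by rw [h]
      have hne : ¬ (v l = (ε (τ l)).1) := by rw [h1]; exact ((hbv l).ne : v l ≠ b (v l) j)
      have hX : (⟨((ε (τ l)).2, (ε (τ l)).1), (hε (τ l)).symm⟩ : EdgeVar G) =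
          ⟨(v l, b (v l) j), hbv l⟩ := Subtype.ext (by
            show ((ε (τ l)).2, (ε (τ l)).1) = (v l, b (v l) j)
            rw [h1, ← h2])
      have hsl : s l = 1 := if_neg (fun hh => hne hh.symm)
      simp only [genMat, if_neg hne, if_pos h2]
      rw [hX, hsl, one_mul]
  -- the product over the distinguished permutation
  have hgenD : (∑ l, Finsupp.single (⟨(v l, b (v l) j), hbv l⟩ : EdgeVar G) 1) =
      genD G b hb' j := by
    rw [genD, Fin.sum_univ_succAbove _ j]
    rw [dif_pos rfl, zero_add]
    exact Finset.sum_congr rfl fun l _ => by rw [dif_neg (hvj l)]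
  have hprodX : (∏ l, (X (⟨(v l, b (v l) j), hbv l⟩ : EdgeVar G) :
      MvPolynomial (EdgeVar G) K)) = monomial (genD G b hb' j) 1 := by
    rw [← hgenD]
    simp_rw [X_eq_monomial]
    exact prod_monomial _ _
  have hsprod : (∏ l, s l) = 1 ∨ (∏ l, s l) = -1 := by
    refine Finset.prod_induction s (fun x => x = 1 ∨ x = -1) ?_ (Or.inl rfl) ?_
    · rintro x y (rfl | rfl) (rfl | rfl) <;> simp
    · intro l _
      by_cases hc : (ε (τ l)).1 = v l
      · exact Or.inr (by simp [hs, hc])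
      · exact Or.inl (by simp [hs, hc])
  have hdiagprod : (∏ l, M (σ₀ l) l) = (∏ l, s l) * monomial (genD G b hb' j) 1 := by
    rw [← hprodX, ← Finset.prod_mul_distrib]
    exact Finset.prod_congr rfl fun l _ => hdiag l
  -- off-diagonal permutations contribute zero
  have hoff : ∀ σ : Equiv.Perm (Fin m), σ ≠ σ₀ → (∏ l, M (σ l) l) = 0 := by
    intro σ hσ
    by_contra hne0
    have hfac : ∀ l, M (σ l) l ≠ 0 := by
      intro l hl
      exact hne0 (Finset.prod_eq_zero (Finset.mem_univ l) hl)
    have hend : ∀ l, v l = (ε (σ l)).1 ∨ v l = (ε (σ l)).2 := by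
      intro l
      by_contra hcon
      push_neg at hcon
      apply hfac l
      show genMat K G ε hε (σ l) (v l) = 0
      simp only [genMat, if_neg hcon.1, if_neg hcon.2]
    have key : ∀ (l : Fin m) (w : Fin (m + 1)), G.Adj (v l) w →
        (ε (σ l) = (v l, w) ∨ ε (σ l) = (w, v l)) →
        ∃ l', σ l = τ l' ∧ G.dist (v l) j ≤ G.dist (v l') j ∧
          (σ l ≠ τ l → G.dist (v l) j < G.dist (v l') j) := by
      intro l w hadj hεform
      rcases adj_dist hG (j := j) hadj with hd | hd
      · have hwj : w ≠ j := by
          intro hh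
          rw [hh, SimpleGraph.dist_self] at hd
          omega
        obtain ⟨l', hl'⟩ := Fin.exists_succAbove_eq hwj
        have hvl' : v l' = w := hl'
        have hbw : v l = b w j :=
          tree_unique_step hG hadj.symm (hb w j hwj).1 hd (hb w j hwj).2
        refine ⟨l', ?_, ?_, fun _ => ?_⟩
        · apply hτu l'
          rw [hvl', ← hbw]
          exact hεform.symm
        · rw [hvl']; omega
        · rw [hvl']; omega
      · have hbv' : w = b (v l) j :=
          tree_unique_step hG hadj (hb (v l) j (hvj l)).1 hd (hb (v l) j (hvj l)).2
        have hστ : σ l = τ l := hτu l _ (by rw [← hbv']; exact hεform)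
        exact ⟨l, hστ, le_refl _, fun hc => absurd hστ hc⟩
    have claim : ∀ l, ∃ l', σ l = τ l' ∧ G.dist (v l) j ≤ G.dist (v l') j ∧
        (σ l ≠ τ l → G.dist (v l) j < G.dist (v l') j) := by
      intro l
      rcases hend l with h | h
      · exact key l (ε (σ l)).2 (by rw [h]; exact hε (σ l))
          (Or.inl (by rw [h]))
      · exact key l (ε (σ l)).1 (by rw [h]; exact (hε (σ l)).symm)
          (Or.inr (by rw [h]))
    choose ρ hρ1 hρ2 hρ3 using claim
    have hρinj : Function.Injective ρ := by
      intro l1 l2 h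
      apply σ.injective
      rw [hρ1 l1, hρ1 l2, h]
    obtain ⟨l₀, hl₀⟩ : ∃ l₀, σ l₀ ≠ τ l₀ := by
      by_contra hc
      push_neg at hc
      exact hσ (Equiv.ext fun l => by rw [hc l, ← hσ₀app])
    have hρe := Equiv.sum_comp (Equiv.ofBijective ρ (Finite.injective_iff_bijective.mp hρinj))
      (fun l => G.dist (v l) j)
    have hlt : ∑ l, G.dist (v l) j < ∑ l, G.dist (v (ρ l)) j := by
      refine Finset.sum_lt_sum (fun l _ => hρ2 l) ⟨l₀, Finset.mem_univ _, hρ3 l₀ hl₀⟩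
    rw [show (∑ l, G.dist (v (ρ l)) j) =
      ∑ l, G.dist (v ((Equiv.ofBijective ρ (Finite.injective_iff_bijective.mp hρinj)) l)) j
      from rfl, hρe] at hlt
    omega
  -- assemble the determinant
  have hdet : genMinor K G ε hε j =
      Equiv.Perm.sign σ₀ • ((∏ l, s l) * monomial (genD G b hb' j) 1) := by
    rw [genMinor, Matrix.det_apply, ← hdiagprod]
    rw [Finset.sum_eq_single σ₀]
    · intro σ _ hσ
      rw [hoff σ hσ, smul_zero]
    · intro h
      exact absurd (Finset.mem_univ σ₀) h
  rcases Int.units_eq_one_or (Equiv.Perm.sign σ₀) with hsgn | hsgn <;>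
    rw [hsgn] at hdet <;> rcases hsprod with hsp | hsp <;> rw [hsp] at hdet
  · exact ⟨1, Or.inl rfl, by simpa using hdet⟩
  · exact ⟨-1, Or.inr rfl, by simpa using hdet⟩
  · exact ⟨-1, Or.inr rfl, by simpa using hdet⟩
  · exact ⟨1, Or.inl rfl, by simpa using hdet⟩

lemma X_dvd_monomial {σ : Type*} (d : σ →₀ ℕ) (x : σ) (h : d x ≠ 0) :
    monomial d (1 : K) = X x * monomial (d - Finsupp.single x 1) 1 := by
  rw [X_eq_monomial, monomial_mul, one_mul]
  congr 1
  rw [add_tsub_cancel_of_le (Finsupp.single_le_iff.mpr (by omega))]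

lemma genD_apply {m : ℕ} {G : SimpleGraph (Fin (m + 1))}
    {b : Fin (m + 1) → Fin (m + 1) → Fin (m + 1)}
    (hb'' : ∀ i j : Fin (m + 1), i ≠ j → G.Adj i (b i j)) (k : Fin (m + 1))
    (e : EdgeVar G) :
    (genD G b hb'' k) e = if e.1.1 ≠ k ∧ e.1.2 = b e.1.1 k then 1 else 0 := by
  classical
  rw [genD, Finsupp.finset_sum_apply]
  rw [Finset.sum_eq_single e.1.1]
  · by_cases h : e.1.1 = k
    · rw [dif_pos h, if_neg (fun hc => hc.1 h)]
      rfl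
    · rw [dif_neg h]
      by_cases h2 : e.1.2 = b e.1.1 k
      · have he : (⟨(e.1.1, b e.1.1 k), hb'' e.1.1 k h⟩ : EdgeVar G) = e :=
          Subtype.ext (Prod.ext rfl h2.symm)
        rw [he, Finsupp.single_eq_same, if_pos ⟨h, h2⟩]
      · rw [Finsupp.single_eq_of_ne' (fun hc => h2 (by rw [← hc])), if_neg (fun hc => h2 hc.2)]
  · intro i _ hne
    by_cases h : i = k
    · rw [dif_pos h]; rfl
    · rw [dif_neg h]
      exact Finsupp.single_eq_of_ne' (fun hc => hne (by rw [← hc]))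
  · intro h
    exact absurd (Finset.mem_univ _) h

end Aux

end CMCodim2Aux

open CMCodim2 MvPolynomial
/-- Let `Γ` be a tree on the vertex set `[m+1]`. Then the generic
monomial ideal `I(Γ)` has the primary decomposition
`I(Γ) = ⋂_{1 ≤ i < j ≤ m+1} (x_{i,b(i,j)}, x_{j,e(i,j)})` (recall `e(i,j) = b(j,i)`). -/
theorem statement2 (K : Type*) [Field K] {m : ℕ}
    (G : SimpleGraph (Fin (m + 1))) (hG : G.IsTree)
    (ε : Fin m → Fin (m + 1) × Fin (m + 1)) (hε : ∀ k, G.Adj (ε k).1 (ε k).2)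
    (henum : EdgeEnum G ε)
    (b : Fin (m + 1) → Fin (m + 1) → Fin (m + 1)) (hb : PathBegin G b) :
    Ideal.span (Set.range fun j => genMinor K G ε hε j) =
      ⨅ (i : Fin (m + 1)) (j : Fin (m + 1)) (h : i < j),
        Ideal.span {(X ⟨(i, b i j), (hb i j h.ne).1⟩ : MvPolynomial (EdgeVar G) K),
          X ⟨(j, b j i), (hb j i h.ne').1⟩} := by
  classical
  have hb' : ∀ i j : Fin (m + 1), i ≠ j → G.Adj i (b i j) := fun i j h => (hb i j h).1
  have hminor := fun j => CMCodim2Aux.minor_eq_monomial K hG hε henum hb j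
  apply le_antisymm
  · rw [Ideal.span_le]
    rintro _ ⟨k, rfl⟩
    obtain ⟨c, hc, hck⟩ := hminor k
    simp only [SetLike.mem_coe, Ideal.mem_iInf]
    intro i j hij
    rw [hck]
    apply Ideal.mul_mem_left
    rcases CMCodim2Aux.tree_branch hG hb hij.ne k with ⟨hki, hbb⟩ | ⟨hkj, hbb⟩
    · have h1 : (genD G b (fun i j h => (hb i j h).1) k) ⟨(i, b i j), (hb i j hij.ne).1⟩ ≠ 0 := by
        rw [CMCodim2Aux.genD_apply, if_pos ⟨Ne.symm hki, Eq.symm hbb⟩]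
        exact one_ne_zero
      rw [CMCodim2Aux.X_dvd_monomial _ _ h1]
      exact Ideal.mul_mem_right _ _ (Ideal.subset_span (Set.mem_insert _ _))
    · have h1 : (genD G b (fun i j h => (hb i j h).1) k) ⟨(j, b j i), (hb j i hij.ne').1⟩ ≠ 0 := by
        rw [CMCodim2Aux.genD_apply, if_pos ⟨Ne.symm hkj, Eq.symm hbb⟩]
        exact one_ne_zero
      rw [CMCodim2Aux.X_dvd_monomial _ _ h1]
      exact Ideal.mul_mem_right _ _ (Ideal.subset_span (Set.mem_insert_of_mem _ rfl))
  · intro p hp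
    simp only [Ideal.mem_iInf] at hp
    have hspan : Ideal.span (Set.range fun j => genMinor K G ε hε j) =
        Ideal.span ((fun s => (monomial s (1 : K))) ''
          Set.range (genD G b (fun i j h => (hb i j h).1))) := by
      apply le_antisymm <;> rw [Ideal.span_le]
      · rintro _ ⟨k, rfl⟩
        obtain ⟨c, hc, hck⟩ := hminor k
        dsimp only
        rw [hck]
        exact Ideal.mul_mem_left _ _
          (Ideal.subset_span ⟨genD G b (fun i j h => (hb i j h).1) k, ⟨k, rfl⟩, rfl⟩)
      · rintro _ ⟨_, ⟨k, rfl⟩, rfl⟩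
        obtain ⟨c, hc, hck⟩ := hminor k
        have hmk : (monomial (genD G b (fun i j h => (hb i j h).1) k) (1 : K)) =
            c * genMinor K G ε hε k := by
          rw [hck, ← mul_assoc]
          rcases hc with rfl | rfl <;> simp
        dsimp only
        rw [hmk]
        exact Ideal.mul_mem_left _ _ (Ideal.subset_span ⟨k, rfl⟩)
    rw [hspan, MvPolynomial.mem_ideal_span_monomial_image]
    intro a ha
    have hP : ∀ i j : Fin (m + 1), i ≠ j →
        (∃ h : G.Adj i (b i j), a ⟨(i, b i j), h⟩ ≠ 0) ∨
        (∃ h : G.Adj j (b j i), a ⟨(j, b j i), h⟩ ≠ 0) := by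
      intro i j hij
      rcases lt_or_gt_of_ne hij with hlt | hgt
      · have hm := hp i j hlt
        rw [show ({(X ⟨(i, b i j), (hb i j hlt.ne).1⟩ : MvPolynomial (EdgeVar G) K),
              X ⟨(j, b j i), (hb j i hlt.ne').1⟩} : Set (MvPolynomial (EdgeVar G) K)) =
            X '' {⟨(i, b i j), (hb i j hlt.ne).1⟩, ⟨(j, b j i), (hb j i hlt.ne').1⟩}
            from (Set.image_pair _ _ _).symm, MvPolynomial.mem_ideal_span_X_image] at hm
        obtain ⟨e, he, hne⟩ := hm a ha
        rcases he with rfl | he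
        · exact Or.inl ⟨_, hne⟩
        · rw [Set.mem_singleton_iff] at he
          subst he
          exact Or.inr ⟨_, hne⟩
      · have hm := hp j i hgt
        rw [show ({(X ⟨(j, b j i), (hb j i hgt.ne).1⟩ : MvPolynomial (EdgeVar G) K),
              X ⟨(i, b i j), (hb i j hgt.ne').1⟩} : Set (MvPolynomial (EdgeVar G) K)) =
            X '' {⟨(j, b j i), (hb j i hgt.ne).1⟩, ⟨(i, b i j), (hb i j hgt.ne').1⟩}
            from (Set.image_pair _ _ _).symm, MvPolynomial.mem_ideal_span_X_image] at hm
        obtain ⟨e, he, hne⟩ := hm a ha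
        rcases he with rfl | he
        · exact Or.inr ⟨_, hne⟩
        · rw [Set.mem_singleton_iff] at he
          subst he
          exact Or.inl ⟨_, hne⟩
    obtain ⟨k, hk⟩ := CMCodim2Aux.tree_cover hG hb (fun i c => ∃ h : G.Adj i c, a ⟨(i, c), h⟩ ≠ 0) hP
    refine ⟨genD G b (fun i j h => (hb i j h).1) k, ⟨k, rfl⟩, ?_⟩
    rw [Finsupp.le_def]
    intro e
    rw [CMCodim2Aux.genD_apply]
    split_ifs with h
    · obtain ⟨h1, h2⟩ := h
      obtain ⟨hadj, hne⟩ := hk e.1.1 h1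
      have he : (⟨(e.1.1, b e.1.1 k), hadj⟩ : EdgeVar G) = e :=
        Subtype.ext (Prod.ext rfl h2.symm)
      rw [he] at hne
      omega
    · exact Nat.zero_le _
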